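/- If μ is a uniformly bounded Borel measure on a metric space (X, δ), then for every x ∈ X the asymptotic dimension of X equals the volume growth exponent: d∞(X) = limsup_{R→∞} (log μ(B(x,R)) / log R). -/

import Mathlib

open Metric Filter Set
open scoped ENNReal

/-- Least number of open balls of radius `r` (arbitrary centres) needed to cover `Ω`;
`⊤` if no finite cover exists. -/
noncomputable def coverNum {X : Type*} [MetricSpace X] (r : ℝ) (Ω : Set X) : ℕ∞ :=
  sInf ((fun s : Finset X => (s.card : ℕ∞)) '' {s | Ω ⊆ ⋃ y ∈ s, Metric.ball y r})

/-- Largest number of pairwise disjoint open balls of radius `r` with centres in `Ω`. -/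
noncomputable def packNum {X : Type*} [MetricSpace X] (r : ℝ) (Ω : Set X) : ℕ∞ :=
  sSup ((fun s : Finset X => (s.card : ℕ∞)) ''
    {s | ↑s ⊆ Ω ∧ (s : Set X).Pairwise fun a b => Disjoint (Metric.ball a r) (Metric.ball b r)})

/-- Logarithm of an extended natural number, valued in `[0,∞]`. -/
noncomputable def elog (n : ℕ∞) : ℝ≥0∞ :=
  if n = ⊤ then ⊤ else ENNReal.ofReal (Real.log n.toNat)

/-- The quantity `log n_r(B(x,R)) / log R`. -/
noncomputable def dimRatio {X : Type*} [MetricSpace X] (x : X) (r R : ℝ) : ℝ≥0∞ :=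
  elog (coverNum r (Metric.ball x R)) / ENNReal.ofReal (Real.log R)

/-- The asymptotic dimension computed at the base point `x`:
`lim_{r→∞} limsup_{R→∞} log n_r(B(x,R)) / log R`; since the inner expression is
nonincreasing in `r`, the limit equals the infimum over `r > 0`. -/
noncomputable def asympDimAt {X : Type*} [MetricSpace X] (x : X) : ℝ≥0∞ :=
  ⨅ (r : ℝ) (_ : 0 < r), Filter.limsup (fun R => dimRatio x r R) Filter.atTop

/-- The asymptotic dimension `d∞(X)` of a nonempty metric space. -/
noncomputable def asympDim (X : Type*) [MetricSpace X] [Nonempty X] : ℝ≥0∞ :=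
  asympDimAt (Classical.arbitrary X)

open MeasureTheory in
/-- A Borel measure `μ` on a metric space is uniformly bounded if for every `r > 0`,
`β₁(r) := inf_x μ(B(x,r)) > 0` and `β₂(r) := sup_x μ(B(x,r)) < ∞`. -/
def UniformlyBoundedMeasure {X : Type*} [MetricSpace X] [MeasurableSpace X]
    (μ : Measure X) : Prop :=
  ∀ r : ℝ, 0 < r →
    (0 < ⨅ x : X, μ (Metric.ball x r)) ∧ (⨆ x : X, μ (Metric.ball x r)) < ⊤

/-- Logarithm of an extended nonnegative real, valued in `[0,∞]`. -/
noncomputable def elogENN (v : ℝ≥0∞) : ℝ≥0∞ :=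
  if v = ⊤ then ⊤ else ENNReal.ofReal (Real.log v.toReal)

section AuxLemmas

open MeasureTheory

private lemma elog_eq_elogENN (n : ℕ∞) : elog n = elogENN (n : ℝ≥0∞) := by
  induction n using ENat.recTopCoe with
  | top => simp [elog, elogENN]
  | coe k => simp [elog, elogENN]

private lemma elogENN_mono : Monotone elogENN := by
  intro a b hab
  unfold elogENN
  rcases eq_or_ne b ⊤ with rfl | hb
  · simp
  · have ha : a ≠ ⊤ := ne_top_of_le_ne_top hb hab
    rw [if_neg ha, if_neg hb]
    rcases eq_or_ne a.toReal 0 with h0 | h0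
    · simp [h0]
    · exact ENNReal.ofReal_le_ofReal (Real.log_le_log
        (lt_of_le_of_ne ENNReal.toReal_nonneg (Ne.symm h0))
        ((ENNReal.toReal_le_toReal ha hb).mpr hab))

private lemma elogENN_mul_le (a b : ℝ≥0∞) : elogENN (a * b) ≤ elogENN a + elogENN b := by
  unfold elogENN
  rcases eq_or_ne a ⊤ with rfl | ha
  · rcases eq_or_ne b 0 with rfl | hb0
    · simp
    · simp [ENNReal.top_mul hb0]
  rcases eq_or_ne b ⊤ with rfl | hb
  · rcases eq_or_ne a 0 with rfl | ha0
    · simp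
    · simp [ENNReal.mul_top ha0]
  rw [if_neg (ENNReal.mul_ne_top ha hb), if_neg ha, if_neg hb]
  rcases eq_or_ne a 0 with rfl | ha0
  · simp
  rcases eq_or_ne b 0 with rfl | hb0
  · simp
  rw [ENNReal.toReal_mul, Real.log_mul (ENNReal.toReal_ne_zero.mpr ⟨ha0, ha⟩)
    (ENNReal.toReal_ne_zero.mpr ⟨hb0, hb⟩)]
  exact ENNReal.ofReal_add_le

private lemma elogENN_ne_top {a : ℝ≥0∞} (h : a ≠ ⊤) : elogENN a ≠ ⊤ := by
  rw [elogENN, if_neg h]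
  exact ENNReal.ofReal_ne_top

private lemma limsup_shift (u : ℝ → ℝ≥0∞) (c : ℝ) :
    Filter.limsup (fun R => u (R + c)) Filter.atTop = Filter.limsup u Filter.atTop := by
  have h : Filter.map (fun R : ℝ => R + c) Filter.atTop = Filter.atTop := by
    have h2 : (fun R : ℝ => R + c) = ⇑(OrderIso.addRight c) := by
      funext R
      simp
    rw [h2]
    exact (OrderIso.addRight c).map_atTop
  conv_rhs => rw [← h]
  rw [Filter.limsup, Filter.limsup, Filter.map_map]
  rfl

private lemma limsup_ratio_le {f g : ℝ → ℝ≥0∞} {c : ℝ} (hc : 0 ≤ c) {K : ℝ≥0∞} (hK : K ≠ ⊤)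
    (h : ∀ᶠ R in Filter.atTop, f R ≤ K * g (R + c)) :
    Filter.limsup (fun R => elogENN (f R) / ENNReal.ofReal (Real.log R)) Filter.atTop ≤
      Filter.limsup (fun R => elogENN (g R) / ENNReal.ofReal (Real.log R)) Filter.atTop := by
  set L := Filter.limsup (fun R => elogENN (g R) / ENNReal.ofReal (Real.log R)) Filter.atTop
    with hLdef
  rcases eq_or_ne L ⊤ with hLt | hLt
  · rw [hLt]; exact le_top
  set A := elogENN K with hA
  have hAne : A ≠ ⊤ := elogENN_ne_top hK
  set s : ℝ → ℝ≥0∞ := fun R => elogENN (g (R + c)) / ENNReal.ofReal (Real.log (R + c)) with hs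
  have hsL : Filter.limsup s Filter.atTop = L :=
    limsup_shift (fun S => elogENN (g S) / ENNReal.ofReal (Real.log S)) c
  have key : ∀ ε : ℝ, 0 < ε →
      Filter.limsup (fun R => elogENN (f R) / ENNReal.ofReal (Real.log R)) Filter.atTop ≤
        ENNReal.ofReal ε + ENNReal.ofReal (1 + ε) * (L + ENNReal.ofReal ε) := by
    intro ε hε
    have ev2 : ∀ᶠ R in Filter.atTop, s R < L + ENNReal.ofReal ε := by
      have hlt : Filter.limsup s Filter.atTop < L + ENNReal.ofReal ε := by
        rw [hsL]
        exact ENNReal.lt_add_right hLt (by simp [ENNReal.ofReal_eq_zero]; linarith)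
      exact Filter.eventually_lt_of_limsup_lt hlt
    have hlog := Real.tendsto_log_atTop
    apply Filter.limsup_le_of_le (by isBoundedDefault)
    filter_upwards [h, ev2, hlog.eventually_ge_atTop (A.toReal / ε),
      hlog.eventually_ge_atTop (Real.log 2 / ε), Filter.eventually_ge_atTop c,
      Filter.eventually_gt_atTop 1] with R hfR hsR hR1 hR2 hRc hRgt
    have hlogR : 0 < Real.log R := Real.log_pos hRgt
    set p := ENNReal.ofReal (Real.log R) with hp
    have hp0 : p ≠ 0 := by simp [hp, ENNReal.ofReal_eq_zero]; linarith
    have hpt : p ≠ ⊤ := ENNReal.ofReal_ne_top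
    set k := ENNReal.ofReal (1 + ε) with hk
    have hk0 : k ≠ 0 := by simp [hk, ENNReal.ofReal_eq_zero]; linarith
    have hkt : k ≠ ⊤ := ENNReal.ofReal_ne_top
    have step1 : elogENN (f R) ≤ A + elogENN (g (R + c)) :=
      (elogENN_mono hfR).trans (elogENN_mul_le _ _)
    have step2 : elogENN (f R) / p ≤ A / p + elogENN (g (R + c)) / p := by
      rw [← ENNReal.add_div]
      exact ENNReal.div_le_div_right step1 p
    have step3 : A / p ≤ ENNReal.ofReal ε := by
      rw [ENNReal.div_le_iff hp0 hpt, hp, ← ENNReal.ofReal_mul hε.le]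
      conv_lhs => rw [← ENNReal.ofReal_toReal hAne]
      apply ENNReal.ofReal_le_ofReal
      rw [div_le_iff₀ hε] at hR1
      linarith [hR1]
    have hq : ENNReal.ofReal (Real.log (R + c)) ≤ k * p := by
      rw [hk, hp, ← ENNReal.ofReal_mul (by linarith : (0:ℝ) ≤ 1 + ε)]
      apply ENNReal.ofReal_le_ofReal
      have h2R : Real.log (R + c) ≤ Real.log 2 + Real.log R := by
        have : R + c ≤ 2 * R := by linarith
        calc Real.log (R + c) ≤ Real.log (2 * R) :=
              Real.log_le_log (by linarith) this
          _ = Real.log 2 + Real.log R := Real.log_mul (by norm_num) (by linarith)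
      rw [div_le_iff₀ hε] at hR2
      nlinarith [hR2]
    have step4 : elogENN (g (R + c)) / p ≤ k * s R := by
      have e1 : elogENN (g (R + c)) / p = k * elogENN (g (R + c)) / (k * p) :=
        (ENNReal.mul_div_mul_left _ _ hk0 hkt).symm
      rw [e1, hs]
      calc k * elogENN (g (R + c)) / (k * p)
          ≤ k * elogENN (g (R + c)) / ENNReal.ofReal (Real.log (R + c)) :=
            ENNReal.div_le_div_left hq _
        _ = k * (elogENN (g (R + c)) / ENNReal.ofReal (Real.log (R + c))) := by
            rw [mul_div_assoc]
    calc elogENN (f R) / p ≤ A / p + elogENN (g (R + c)) / p := step2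
      _ ≤ ENNReal.ofReal ε + k * s R := add_le_add step3 step4
      _ ≤ ENNReal.ofReal ε + k * (L + ENNReal.ofReal ε) :=
          add_le_add_right (mul_le_mul_right hsR.le _) _
  have hcont : Filter.Tendsto
      (fun ε : ℝ => ENNReal.ofReal ε + ENNReal.ofReal (1 + ε) * (L + ENNReal.ofReal ε))
      (nhdsWithin 0 (Set.Ioi 0)) (nhds L) := by
    have h0 : Filter.Tendsto (fun ε : ℝ => ENNReal.ofReal ε) (nhdsWithin 0 (Set.Ioi 0))
        (nhds 0) := by
      have h0' : Filter.Tendsto (fun ε : ℝ => ENNReal.ofReal ε) (nhds 0) (nhds 0) := by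
        have := ENNReal.continuous_ofReal.tendsto (0 : ℝ)
        simpa using this
      exact h0'.mono_left nhdsWithin_le_nhds
    have h1 : Filter.Tendsto (fun ε : ℝ => ENNReal.ofReal (1 + ε)) (nhdsWithin 0 (Set.Ioi 0))
        (nhds 1) := by
      have h1' : Filter.Tendsto (fun ε : ℝ => ENNReal.ofReal (1 + ε)) (nhds 0) (nhds 1) := by
        have hcontf : Continuous (fun ε : ℝ => ENNReal.ofReal (1 + ε)) :=
          ENNReal.continuous_ofReal.comp (continuous_const.add continuous_id)
        have := hcontf.tendsto (0 : ℝ)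
        simpa using this
      exact h1'.mono_left nhdsWithin_le_nhds
    have h2 : Filter.Tendsto (fun ε : ℝ => L + ENNReal.ofReal ε) (nhdsWithin 0 (Set.Ioi 0))
        (nhds L) := by
      have := Filter.Tendsto.const_add L h0
      simpa using this
    have h3 := ENNReal.Tendsto.mul h1 (Or.inl one_ne_zero) h2 (Or.inr ENNReal.one_ne_top)
    rw [one_mul] at h3
    have h4 := Filter.Tendsto.add h0 h3
    simpa using h4
  refine ge_of_tendsto hcont ?_
  filter_upwards [self_mem_nhdsWithin] with ε (hε : ε ∈ Set.Ioi (0:ℝ))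
  exact key ε hε

open MeasureTheory in
private lemma measure_le_coverNum {X : Type*} [MetricSpace X] [MeasurableSpace X] [BorelSpace X]
    (μ : Measure X) (r : ℝ) (Ω : Set X) (h0 : (⨆ y, μ (Metric.ball y r)) ≠ 0) :
    μ Ω ≤ (coverNum r Ω : ℝ≥0∞) * ⨆ y, μ (Metric.ball y r) := by
  set S := ((fun s : Finset X => (s.card : ℕ∞)) '' {s | Ω ⊆ ⋃ y ∈ s, Metric.ball y r}) with hS
  rcases S.eq_empty_or_nonempty with hSe | hSne
  · have htop : coverNum r Ω = ⊤ := by rw [coverNum, ← hS, hSe, sInf_empty]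
    rw [htop, ENat.toENNReal_top, ENNReal.top_mul h0]
    exact le_top
  · obtain ⟨s, hscov, hcard⟩ := csInf_mem hSne
    have h1 : μ Ω ≤ ∑ y ∈ s, μ (Metric.ball y r) :=
      (measure_mono hscov).trans (measure_biUnion_finset_le s _)
    refine h1.trans ?_
    have h2 : coverNum r Ω = (s.card : ℕ∞) := by rw [coverNum, ← hS, ← hcard]
    calc ∑ y ∈ s, μ (Metric.ball y r) ≤ ∑ _y ∈ s, ⨆ z, μ (Metric.ball z r) :=
          Finset.sum_le_sum fun y _ => le_iSup (fun z => μ (Metric.ball z r)) y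
      _ = (s.card : ℝ≥0∞) * ⨆ z, μ (Metric.ball z r) := by
          rw [Finset.sum_const, nsmul_eq_mul]
      _ = (coverNum r Ω : ℝ≥0∞) * ⨆ z, μ (Metric.ball z r) := by
          rw [h2, ENat.toENNReal_coe]

open MeasureTheory in
private lemma coverNum_mul_le {X : Type*} [MetricSpace X] [MeasurableSpace X] [BorelSpace X]
    [Nonempty X] (μ : Measure X) (hμ : UniformlyBoundedMeasure μ) (x₀ : X) {r : ℝ} (hr : 0 < r)
    (R : ℝ) :
    (coverNum (2 * r) (Metric.ball x₀ R) : ℝ≥0∞) * (⨅ y, μ (Metric.ball y r)) ≤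
      μ (Metric.ball x₀ (R + r)) := by
  classical
  set β := ⨅ y, μ (Metric.ball y r) with hβ
  have hβ0 : β ≠ 0 := (hμ r hr).1.ne'
  set P : Set (Finset X) := {s | ↑s ⊆ Metric.ball x₀ R ∧
    (s : Set X).Pairwise fun a b => Disjoint (Metric.ball a r) (Metric.ball b r)} with hP
  have hbound : ∀ s ∈ P, (s.card : ℝ≥0∞) * β ≤ μ (Metric.ball x₀ (R + r)) := by
    intro s hs
    have hmeas : μ (⋃ y ∈ s, Metric.ball y r) = ∑ y ∈ s, μ (Metric.ball y r) :=
      measure_biUnion_finset hs.2 fun y _ => measurableSet_ball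
    have hsub : (⋃ y ∈ s, Metric.ball y r) ⊆ Metric.ball x₀ (R + r) := by
      simp only [Set.iUnion_subset_iff]
      intro y hy z hz
      have h1 : dist y x₀ < R := hs.1 hy
      rw [Metric.mem_ball] at hz ⊢
      calc dist z x₀ ≤ dist z y + dist y x₀ := dist_triangle _ _ _
        _ < r + R := add_lt_add hz h1
        _ = R + r := add_comm _ _
    calc (s.card : ℝ≥0∞) * β = ∑ _y ∈ s, β := by rw [Finset.sum_const, nsmul_eq_mul]
      _ ≤ ∑ y ∈ s, μ (Metric.ball y r) :=
          Finset.sum_le_sum fun y _ => iInf_le (fun z => μ (Metric.ball z r)) y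
      _ = μ (⋃ y ∈ s, Metric.ball y r) := hmeas.symm
      _ ≤ μ (Metric.ball x₀ (R + r)) := measure_mono hsub
  have hfin : μ (Metric.ball x₀ (R + r)) ≠ ⊤ := by
    rcases le_or_gt (R + r) 0 with h | h
    · simp [Metric.ball_eq_empty.2 h]
    · exact ((le_iSup (fun y => μ (Metric.ball y (R + r))) x₀).trans_lt (hμ _ h).2).ne
  obtain ⟨N, hN⟩ := ENNReal.exists_nat_gt ((ENNReal.div_lt_top hfin hβ0).ne)
  have hcard : ∀ s ∈ P, s.card ≤ N := by
    intro s hs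
    have h1 : (s.card : ℝ≥0∞) ≤ μ (Metric.ball x₀ (R + r)) / β :=
      (ENNReal.le_div_iff_mul_le (Or.inl hβ0) (Or.inr hfin)).mpr (hbound s hs)
    have h3 : (s.card : ℝ≥0∞) < (N : ℝ≥0∞) := h1.trans_lt hN
    exact_mod_cast h3.le
  have hPne : (Finset.card '' P).Nonempty := ⟨0, ∅, by simp [hP], rfl⟩
  have hbdd : BddAbove (Finset.card '' P) := by
    refine ⟨N, ?_⟩
    rintro n ⟨s, hs, rfl⟩
    exact hcard s hs
  obtain ⟨s, hsP, hscard⟩ := Nat.sSup_mem hPne hbdd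
  have hmax : ∀ t ∈ P, t.card ≤ s.card := by
    intro t ht; rw [hscard]; exact le_csSup hbdd ⟨t, ht, rfl⟩
  have hcover : Metric.ball x₀ R ⊆ ⋃ y ∈ s, Metric.ball y (2 * r) := by
    intro z hz
    by_contra hzc
    simp only [Set.mem_iUnion, Metric.mem_ball, not_exists, not_lt] at hzc
    have hzs : z ∉ s := by
      intro hzs'
      have := hzc z hzs'
      rw [dist_self] at this
      linarith
    have hins : (insert z s) ∈ P := by
      constructor
      · rw [Finset.coe_insert]
        exact Set.insert_subset hz hsP.1
      · rw [Finset.coe_insert]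
        haveI : Std.Symm (fun a b : X => Disjoint (Metric.ball a r) (Metric.ball b r)) :=
          ⟨fun a b hab => hab.symm⟩
        rw [Set.pairwise_insert_of_symm]
        refine ⟨hsP.2, fun y hy _ => ?_⟩
        apply Metric.ball_disjoint_ball
        have := hzc y hy
        linarith
    have hcontr := hmax _ hins
    rw [Finset.card_insert_of_notMem hzs] at hcontr
    omega
  have hle : coverNum (2 * r) (Metric.ball x₀ R) ≤ (s.card : ℕ∞) :=
    sInf_le ⟨s, hcover, rfl⟩
  calc (coverNum (2 * r) (Metric.ball x₀ R) : ℝ≥0∞) * β ≤ (s.card : ℝ≥0∞) * β := by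
        apply mul_le_mul_left
        have := ENat.toENNReal_le.mpr hle
        simpa using this
    _ ≤ μ (Metric.ball x₀ (R + r)) := hbound s hsP

end AuxLemmas

open MeasureTheory in
/-- If `μ` is a uniformly bounded Borel measure on `X`, then for every `x ∈ X` the
asymptotic dimension equals the volume growth exponent:
`d∞(X) = limsup_{R→∞} log μ(B(x,R)) / log R`. -/
theorem asympDim_eq_volume_growth
    {X : Type*} [MetricSpace X] [MeasurableSpace X] [BorelSpace X] [Nonempty X]
    (μ : Measure X) (hμ : UniformlyBoundedMeasure μ) (x : X) :
    asympDim X =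
      Filter.limsup
        (fun R => elogENN (μ (Metric.ball x R)) / ENNReal.ofReal (Real.log R))
        Filter.atTop := by
    classical
  set x₀ := Classical.arbitrary X with hx₀
  set L := Filter.limsup
      (fun R => elogENN (μ (Metric.ball x R)) / ENNReal.ofReal (Real.log R)) Filter.atTop
    with hLdef
  have hsupfin : ∀ ρ : ℝ, 0 < ρ → (⨆ y, μ (Metric.ball y ρ)) ≠ ⊤ := fun ρ hρ => (hμ ρ hρ).2.ne
  have hβ1pos : (0 : ℝ≥0∞) < ⨅ y, μ (Metric.ball y 1) := (hμ 1 one_pos).1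
  have hβ1top : (⨅ y, μ (Metric.ball y 1)) ≠ ⊤ :=
    ((iInf_le (fun y => μ (Metric.ball y 1)) x₀).trans_lt
      ((le_iSup (fun y => μ (Metric.ball y 1)) x₀).trans_lt (hμ 1 one_pos).2)).ne
  have dir1 : asympDim X ≤ L := by
    have h2 : asympDim X ≤ Filter.limsup (fun R => dimRatio x₀ 2 R) Filter.atTop := by
      rw [asympDim, asympDimAt]
      exact iInf_le_of_le 2 (iInf_le_of_le two_pos le_rfl)
    refine h2.trans ?_
    have heq : (fun R => dimRatio x₀ 2 R) = fun R =>
        elogENN ((coverNum 2 (Metric.ball x₀ R) : ℝ≥0∞)) / ENNReal.ofReal (Real.log R) := by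
      funext R
      rw [dimRatio, elog_eq_elogENN]
    rw [heq, hLdef]
    apply limsup_ratio_le (c := 1 + dist x₀ x) (by positivity)
      (K := (⨅ y, μ (Metric.ball y 1))⁻¹) (by simp [ENNReal.inv_ne_top, hβ1pos.ne'])
    apply Filter.Eventually.of_forall
    intro R
    have h3 := coverNum_mul_le μ hμ x₀ one_pos R
    rw [mul_one] at h3
    have h4 : μ (Metric.ball x₀ (R + 1)) ≤ μ (Metric.ball x (R + (1 + dist x₀ x))) := by
      apply measure_mono
      intro y hy
      rw [Metric.mem_ball] at hy ⊢
      calc dist y x ≤ dist y x₀ + dist x₀ x := dist_triangle _ _ _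
        _ < R + (1 + dist x₀ x) := by linarith
    have h5 : (coverNum 2 (Metric.ball x₀ R) : ℝ≥0∞) ≤
        μ (Metric.ball x (R + (1 + dist x₀ x))) / (⨅ y, μ (Metric.ball y 1)) :=
      (ENNReal.le_div_iff_mul_le (Or.inl hβ1pos.ne') (Or.inl hβ1top)).mpr (h3.trans h4)
    rw [ENNReal.div_eq_inv_mul] at h5
    exact h5
  have dir2 : L ≤ asympDim X := by
    rw [asympDim, asympDimAt]
    refine le_iInf fun r => le_iInf fun hr => ?_
    have hsup0 : (⨆ y, μ (Metric.ball y r)) ≠ 0 :=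
      ((hμ r hr).1.trans_le ((iInf_le (fun y => μ (Metric.ball y r)) x₀).trans
        (le_iSup (fun y => μ (Metric.ball y r)) x₀))).ne'
    have heq : (fun R => dimRatio x₀ r R) = fun R =>
        elogENN ((coverNum r (Metric.ball x₀ R) : ℝ≥0∞)) / ENNReal.ofReal (Real.log R) := by
      funext R
      rw [dimRatio, elog_eq_elogENN]
    rw [hLdef, heq]
    apply limsup_ratio_le (c := dist x x₀) dist_nonneg
      (K := ⨆ y, μ (Metric.ball y r)) (hsupfin r hr)
    apply Filter.Eventually.of_forall
    intro R
    have h4 : μ (Metric.ball x R) ≤ μ (Metric.ball x₀ (R + dist x x₀)) := by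
      apply measure_mono
      intro y hy
      rw [Metric.mem_ball] at hy ⊢
      calc dist y x₀ ≤ dist y x + dist x x₀ := dist_triangle _ _ _
        _ < R + dist x x₀ := by linarith
    have h5 := measure_le_coverNum μ r (Metric.ball x₀ (R + dist x x₀)) hsup0
    calc μ (Metric.ball x R) ≤ μ (Metric.ball x₀ (R + dist x x₀)) := h4
      _ ≤ (coverNum r (Metric.ball x₀ (R + dist x x₀)) : ℝ≥0∞) *
            ⨆ y, μ (Metric.ball y r) := h5
      _ = (⨆ y, μ (Metric.ball y r)) *
            (coverNum r (Metric.ball x₀ (R + dist x x₀)) : ℝ≥0∞) := mul_comm _ _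
  exact le_antisymm dir1 dir2
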